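/- Let δ = δ_0 + uδ_1 + ⋯ + u^{t−1}δ_{t−1} ∈ R^t be a unit such that δ_k ≠ 0 for some 1 ≤ k ≤ t−1, and let k be the smallest such index. Then the element x^n − δ_{0,0} of R^{t,n}_δ is nilpotent with nilpotency index ⌈t/k⌉·p^s; that is, (x^n − δ_{0,0})^{⌈t/k⌉p^s} = 0 and (x^n − δ_{0,0})^{⌈t/k⌉p^s − 1} ≠ 0 in R^{t,n}_δ. -/

import Mathlib

set_option maxHeartbeats 1000000

open Polynomial

/-- The finite chain ring `R^t = 𝔽_{p^m}[u]/⟨u^t⟩`. -/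
abbrev Rt (p m t : ℕ) [Fact p.Prime] : Type _ :=
  Polynomial (GaloisField p m) ⧸ Ideal.span {(X : Polynomial (GaloisField p m)) ^ t}

noncomputable instance (p m t : ℕ) [Fact p.Prime] : CommRing (Rt p m t) := Ideal.Quotient.commRing _

/-- The canonical projection `𝔽_{p^m}[u] → R^t`. -/
noncomputable def mkRt (p m t : ℕ) [Fact p.Prime] :
    Polynomial (GaloisField p m) →+* Rt p m t :=
  Ideal.Quotient.mk _

/-- The element `u ∈ R^t`. -/
noncomputable def uRt (p m t : ℕ) [Fact p.Prime] : Rt p m t := mkRt p m t X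

/-- The canonical embedding `𝔽_{p^m} → R^t`. -/
noncomputable def κ (p m t : ℕ) [Fact p.Prime] : GaloisField p m →+* Rt p m t :=
  (mkRt p m t).comp (C : GaloisField p m →+* Polynomial (GaloisField p m))

/-- The quotient ring `R^t[x]/⟨x^N − δ⟩`. -/
abbrev Qr (p m t : ℕ) [Fact p.Prime] (N : ℕ) (δ : Rt p m t) : Type _ :=
  Polynomial (Rt p m t) ⧸ Ideal.span {(X : Polynomial (Rt p m t)) ^ N - C δ}

/-- The canonical projection `R^t[x] → R^t[x]/⟨x^N − δ⟩`. -/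
noncomputable def mkQr (p m t : ℕ) [Fact p.Prime] (N : ℕ) (δ : Rt p m t) :
    Polynomial (Rt p m t) →+* Qr p m t N δ :=
  Ideal.Quotient.mk _

/-- Let `δ ∈ R^t` be a unit with `δ_k ≠ 0` for some `1 ≤ k ≤ t−1`, `k`
smallest such.  Then `xⁿ − δ_{0,0}` is nilpotent in `R^{t,n}_δ` with nilpotency index
`⌈t/k⌉·p^s`: we have `(xⁿ − δ_{0,0})^{⌈t/k⌉p^s} = 0` and `(xⁿ − δ_{0,0})^{⌈t/k⌉p^s − 1} ≠ 0`,
where `⌈t/k⌉ = (t + k − 1)/k` is the least integer `≥ t/k`. -/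
theorem stmt_6 (p m s t n : ℕ) [Fact p.Prime] (hm : m ≠ 0) (ht : 1 ≤ t)
    (hn : 0 < n) (hnp : ¬ p ∣ n)
    (δc : ℕ → GaloisField p m) (hδ0 : δc 0 ≠ 0)
    (δ00 : GaloisField p m) (hδ00 : δ00 ^ p ^ s = δc 0)
    (k : ℕ) (hk1 : 1 ≤ k) (hkt : k ≤ t - 1) (hδk : δc k ≠ 0)
    (hkmin : ∀ j, 1 ≤ j → j < k → δc j = 0) :
    (mkQr p m t (n * p ^ s)
        (mkRt p m t (∑ i ∈ Finset.range t, C (δc i) * X ^ i))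
        (X ^ n - C (κ p m t δ00))) ^ ((t + k - 1) / k * p ^ s) = 0 ∧
    (mkQr p m t (n * p ^ s)
        (mkRt p m t (∑ i ∈ Finset.range t, C (δc i) * X ^ i))
        (X ^ n - C (κ p m t δ00))) ^ ((t + k - 1) / k * p ^ s - 1) ≠ 0 := by
  classical
  have hppos : 0 < p := (Fact.out : p.Prime).pos
  have hps : 0 < p ^ s := pow_pos hppos s
  -- numerics about c = ⌈t/k⌉
  have hc1 : 1 ≤ (t + k - 1) / k := (Nat.one_le_div_iff hk1).mpr (by omega)
  have hkc : t ≤ k * ((t + k - 1) / k) := by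
    have hdm := Nat.div_add_mod (t + k - 1) k
    have hmlt := Nat.mod_lt (t + k - 1) (show 0 < k from hk1)
    generalize hA : k * ((t + k - 1) / k) = A at *
    omega
  have hkc1 : k * ((t + k - 1) / k - 1) ≤ t - 1 := by
    have h1 : k * ((t + k - 1) / k - 1) = k * ((t + k - 1) / k) - k := by
      rw [Nat.mul_sub, Nat.mul_one]
    have h2 : k * ((t + k - 1) / k) ≤ t + k - 1 := by
      rw [mul_comm]; exact Nat.div_mul_le_self _ _
    generalize hA : k * ((t + k - 1) / k) = A at *
    generalize hB : k * ((t + k - 1) / k - 1) = B at *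
    omega
  set c : ℕ := (t + k - 1) / k with hc
  -- char p facts
  haveI hRtChar : CharP (Rt p m t) p := by
    refine CharP.quotient' p _ (fun x hx => ?_)
    rw [Ideal.mem_span_singleton] at hx
    have hXx : (X : Polynomial (GaloisField p m)) ∣ ((x : ℕ) : Polynomial (GaloisField p m)) :=
      dvd_trans (dvd_pow_self X (by omega : t ≠ 0)) hx
    have hcast : ((x : ℕ) : Polynomial (GaloisField p m)) = C ((x : ℕ) : GaloisField p m) := (Polynomial.C_eq_natCast _).symm
    rw [hcast, Polynomial.X_dvd_iff, Polynomial.coeff_C] at hXx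
    simp only [if_true, eq_self_iff_true] at hXx
    rw [hcast, hXx, map_zero]
  haveI : Nontrivial (Rt p m t) := by
    refine Ideal.Quotient.nontrivial_iff.mpr (fun htop => ?_)
    rw [Ideal.span_singleton_eq_top] at htop
    exact Polynomial.not_isUnit_X
      (isUnit_of_dvd_unit (dvd_pow_self X (by omega : t ≠ 0)) htop)
  -- abbreviations
  set P : Polynomial (GaloisField p m) := ∑ i ∈ Finset.range t, C (δc i) * X ^ i with hP
  set δb : Rt p m t := mkRt p m t P with hδb
  set N : ℕ := n * p ^ s with hN
  set g : Polynomial (Rt p m t) := X ^ n - C (κ p m t δ00) with hg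
  set π := mkQr p m t N δb with hπ
  -- basic facts about Rt
  have hu0 : mkRt p m t ((X : Polynomial (GaloisField p m)) ^ t) = 0 :=
    Ideal.Quotient.eq_zero_iff_mem.mpr (Ideal.subset_span rfl)
  have hur : ∀ r : ℕ, r < t → mkRt p m t ((X : Polynomial (GaloisField p m)) ^ r) ≠ 0 := by
    intro r hr h
    rw [show mkRt p m t ((X : Polynomial (GaloisField p m)) ^ r) = Ideal.Quotient.mk _ _ from rfl,
      Ideal.Quotient.eq_zero_iff_mem, Ideal.mem_span_singleton] at h
    have := Polynomial.natDegree_le_of_dvd h (pow_ne_zero r Polynomial.X_ne_zero)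
    simp only [Polynomial.natDegree_pow, Polynomial.natDegree_X, mul_one] at this
    omega
  -- factorization of P - C (δc 0)
  set E : Polynomial (GaloisField p m) := ∑ i ∈ Finset.range (t - k), C (δc (k + i)) * X ^ i with hE
  have hfact : P - C (δc 0) = X ^ k * E := by
    rw [mul_comm]
    ext j
    rw [Polynomial.coeff_sub, Polynomial.coeff_mul_X_pow']
    simp only [hP, hE, Polynomial.finset_sum_coeff, Polynomial.coeff_C_mul,
      Polynomial.coeff_X_pow, mul_ite, mul_one, mul_zero, Polynomial.coeff_C,
      Finset.sum_ite_eq, Finset.mem_range]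
    split_ifs <;>
      first
        | (exfalso; omega)
        | (rw [sub_zero]; exact hkmin j (by omega) (by omega))
        | (rw [sub_zero]; congr 1; omega)
        | (simp only [*, sub_self, sub_zero])
        | (exact hkmin j (by omega) (by omega))
  -- frobenius
  have hfrob : g ^ p ^ s = X ^ N - C (κ p m t (δc 0)) := by
    rw [hg, sub_pow_char_pow, ← pow_mul, ← map_pow, ← map_pow, hδ00]
  have hπf : π (X ^ N - C δb) = 0 :=
    Ideal.Quotient.eq_zero_iff_mem.mpr (Ideal.subset_span rfl)
  have hw : δb - κ p m t (δc 0) = mkRt p m t ((X : Polynomial (GaloisField p m)) ^ k * E) := by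
    rw [← hfact, map_sub]
    rfl
  have hkey : (π g) ^ p ^ s = π (C (δb - κ p m t (δc 0))) := by
    rw [← map_pow, hfrob,
      show (X ^ N - C (κ p m t (δc 0)) : Polynomial (Rt p m t))
        = (X ^ N - C δb) + C (δb - κ p m t (δc 0)) by rw [map_sub]; ring,
      map_add, hπf, zero_add]
  constructor
  · -- vanishing
    have h1 : (π g) ^ (c * p ^ s) = π (C ((δb - κ p m t (δc 0)) ^ c)) := by
      rw [mul_comm c, pow_mul, hkey, ← map_pow, ← map_pow]
    rw [h1, hw, ← map_pow, mul_pow, ← pow_mul]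
    have h2 : (X : Polynomial (GaloisField p m)) ^ (k * c) * E ^ c = X ^ t * (X ^ (k * c - t) * E ^ c) := by
      rw [← mul_assoc, ← pow_add]
      congr 2
      omega
    rw [h2, map_mul, hu0, zero_mul, map_zero, map_zero]
  · -- non-vanishing
    intro h0
    have htk : 0 < t - k := by omega
    have hEc : E.coeff 0 = δc k := by
      simp only [hE, Polynomial.finset_sum_coeff, Polynomial.coeff_C_mul,
        Polynomial.coeff_X_pow, mul_ite, mul_one, mul_zero]
      rw [Finset.sum_eq_single 0]
      · simp
      · intro b _ hb
        simp [Ne.symm hb]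
      · intro hb
        simp only [Finset.mem_range] at hb
        omega
    obtain ⟨q, hq⟩ : (X : Polynomial (GaloisField p m)) ∣ (E - C (E.coeff 0)) := by
      rw [Polynomial.X_dvd_iff]
      simp
    have hE' : E = C (E.coeff 0) + X * q := by rw [← hq]; ring
    have hεu : IsUnit (mkRt p m t E) := by
      rw [hE', map_add]
      refine IsNilpotent.isUnit_add_left_of_commute ?_ ?_ (Commute.all _ _)
      · refine ⟨t, ?_⟩
        rw [← map_pow, mul_pow, map_mul, hu0, zero_mul]
      · have h1 : IsUnit (E.coeff 0) := isUnit_iff_ne_zero.mpr (by rw [hEc]; exact hδk)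
        exact h1.map (κ p m t)
    -- decompose the exponent
    have hsplit : c * p ^ s - 1 = (c - 1) * p ^ s + (p ^ s - 1) := by
      have h1 : (c - 1) * p ^ s = c * p ^ s - p ^ s := by rw [Nat.sub_mul, one_mul]
      have h2 : p ^ s ≤ c * p ^ s := Nat.le_mul_of_pos_left _ (by omega)
      generalize hA : c * p ^ s = A at *
      generalize hB : (c - 1) * p ^ s = B at *
      omega
    have h0' : (π (C (δb - κ p m t (δc 0)))) ^ (c - 1) * (π g) ^ (p ^ s - 1) = 0 := by
      rw [← hkey, ← pow_mul, mul_comm (p ^ s) (c - 1), ← pow_add, ← hsplit]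
      exact h0
    rw [hw] at h0'
    set ρ : Polynomial (GaloisField p m) →+* Qr p m t N δb :=
      (π.comp (C : Rt p m t →+* Polynomial (Rt p m t))).comp (mkRt p m t) with hρ
    have h1 : ρ ((X ^ k * E) ^ (c - 1)) * (π g) ^ (p ^ s - 1) = 0 := by
      rw [map_pow]; exact h0'
    have h2 : ρ ((X : Polynomial (GaloisField p m)) ^ (k * (c - 1))) *
        (ρ (E ^ (c - 1)) * (π g) ^ (p ^ s - 1)) = 0 := by
      have e : ((X : Polynomial (GaloisField p m)) ^ k * E) ^ (c - 1)
          = X ^ (k * (c - 1)) * E ^ (c - 1) := by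
        rw [mul_pow, ← pow_mul]
      rw [e, map_mul, mul_assoc] at h1
      exact h1
    have hεQ : IsUnit (ρ (E ^ (c - 1))) := by
      rw [map_pow]
      exact (hεu.map (π.comp (C : Rt p m t →+* Polynomial (Rt p m t)))).pow _
    replace h2 := (mul_left_comm (ρ ((X : Polynomial (GaloisField p m)) ^ (k * (c - 1)))) (ρ (E ^ (c - 1))) ((π g) ^ (p ^ s - 1))).symm.trans h2
    have h3 : ρ ((X : Polynomial (GaloisField p m)) ^ (k * (c - 1))) * (π g) ^ (p ^ s - 1) = 0 :=
      (IsUnit.mul_right_eq_zero (M₀ := Qr p m t N δb) hεQ).mp h2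
    have h4 : π (C (mkRt p m t ((X : Polynomial (GaloisField p m)) ^ (k * (c - 1)))) *
        g ^ (p ^ s - 1)) = 0 := by
      rw [map_mul, map_pow]; exact h3
    have h5 : (X ^ N - C δb : Polynomial (Rt p m t)) ∣
        C (mkRt p m t ((X : Polynomial (GaloisField p m)) ^ (k * (c - 1)))) * g ^ (p ^ s - 1) := by
      rw [← Ideal.mem_span_singleton]
      exact Ideal.Quotient.eq_zero_iff_mem.mp h4
    obtain ⟨h, hh⟩ := h5
    have hN0 : N ≠ 0 := by rw [hN]; exact Nat.mul_ne_zero hn.ne' hps.ne'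
    have fm : (X ^ N - C δb : Polynomial (Rt p m t)).Monic :=
      monic_X_pow_sub_C _ hN0
    have gm : g.Monic := by rw [hg]; exact monic_X_pow_sub_C _ hn.ne'
    have gpm : (g ^ (p ^ s - 1)).Monic := gm.pow _
    have hgp : (g ^ (p ^ s - 1)).natDegree = (p ^ s - 1) * n := by
      rw [gm.natDegree_pow, hg, natDegree_X_pow_sub_C]
    have hvne : C (mkRt p m t ((X : Polynomial (GaloisField p m)) ^ (k * (c - 1)))) *
        g ^ (p ^ s - 1) ≠ 0 := by
      intro hv
      have hcoe := congrArg (fun q => Polynomial.coeff q ((p ^ s - 1) * n)) hv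
      simp only [Polynomial.coeff_C_mul, Polynomial.coeff_zero] at hcoe
      rw [← hgp, gpm.coeff_natDegree, mul_one] at hcoe
      exact hur (k * (c - 1)) (by omega) hcoe
    have hne : h ≠ 0 := by rintro rfl; rw [mul_zero] at hh; exact hvne hh
    have hlc : (X ^ N - C δb : Polynomial (Rt p m t)).leadingCoeff * h.leadingCoeff ≠ 0 := by
      rw [fm.leadingCoeff, one_mul]
      exact Polynomial.leadingCoeff_ne_zero.mpr hne
    have hdeg : (C (mkRt p m t ((X : Polynomial (GaloisField p m)) ^ (k * (c - 1)))) *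
        g ^ (p ^ s - 1)).natDegree = N + h.natDegree := by
      rw [hh, Polynomial.natDegree_mul' hlc, natDegree_X_pow_sub_C]
    have hle : (C (mkRt p m t ((X : Polynomial (GaloisField p m)) ^ (k * (c - 1)))) *
        g ^ (p ^ s - 1)).natDegree ≤ (p ^ s - 1) * n := by
      refine le_trans (Polynomial.natDegree_C_mul_le _ _) ?_
      rw [hgp]
    rw [hdeg] at hle
    have hlt : (p ^ s - 1) * n < n * p ^ s := by
      have h1 : (p ^ s - 1) * n = p ^ s * n - n := by rw [Nat.sub_mul, one_mul]
      have h2 : n ≤ p ^ s * n := Nat.le_mul_of_pos_left _ hps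
      have h3 : p ^ s * n = n * p ^ s := mul_comm _ _
      generalize hA : p ^ s * n = A at *
      generalize hB : (p ^ s - 1) * n = B at *
      omega
    rw [hN] at hle
    generalize hA : n * p ^ s = A at *
    generalize hB : (p ^ s - 1) * n = B at *
    omega
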